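/- arXiv:1703.05934 — 3 statements merged into one kernel-verified Lean document; each statement's English description precedes it below -/
import Mathlib

section
/- Let $N \ge 2$, $0 \le \gamma < N$, and let $F(x) = \left(\frac{N-\gamma}{N}\right)^{\frac{N}{N-\gamma}} |x|^{\frac{\gamma}{N-\gamma}} x$. Let $u : \mathbb{R}^N \to \mathbb{R}$ be differentiable at $F(x)$ for some $x \ne 0$, and define $v(x) = \left(\frac{N-\gamma}{N}\right)^{\frac{N-1}{N}} u(F(x))$. Then the pointwise inequality $|\nabla v(x)| \le \left(\frac{N-\gamma}{N}\right)^{\frac{N-1}{N}} |F(x)|^{\frac{\gamma}{N}} |\nabla u(F(x))|$ holds. -/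
open Real

set_option maxHeartbeats 1000000 in
theorem gradient_pointwise_bound_under_change_of_function (N : ℕ) (hN : 2 ≤ N)
    (γ : ℝ) (hγ0 : 0 ≤ γ) (hγ : γ < N)
    (F : EuclideanSpace ℝ (Fin N) → EuclideanSpace ℝ (Fin N))
    (hF : ∀ x, F x = ((((N : ℝ) - γ) / N) ^ ((N : ℝ) / ((N : ℝ) - γ)) *
      ‖x‖ ^ (γ / ((N : ℝ) - γ))) • x)
    (u : EuclideanSpace ℝ (Fin N) → ℝ)
    (x : EuclideanSpace ℝ (Fin N)) (hx : x ≠ 0)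
    (hu : DifferentiableAt ℝ u (F x))
    (v : EuclideanSpace ℝ (Fin N) → ℝ)
    (hv : ∀ y, v y = (((N : ℝ) - γ) / N) ^ (((N : ℝ) - 1) / N) * u (F y)) :
    ‖gradient v x‖ ≤ (((N : ℝ) - γ) / N) ^ (((N : ℝ) - 1) / N) *
      ‖F x‖ ^ (γ / N) * ‖gradient u (F x)‖ := by
  have hx' : (0:ℝ) < ‖x‖ := norm_pos_iff.mpr hx
  have hN0 : (0:ℝ) < N := by
    have : (2:ℝ) ≤ N := by exact_mod_cast hN
    linarith
  have hNγ : (0:ℝ) < (N:ℝ) - γ := by linarith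
  set r : ℝ := ((N:ℝ) - γ) / N with hr_def
  have hr : 0 < r := div_pos hNγ hN0
  set s : ℝ := (N:ℝ) / ((N:ℝ) - γ) with hs_def
  set α : ℝ := γ / ((N:ℝ) - γ) with hα_def
  have hα0 : 0 ≤ α := div_nonneg hγ0 hNγ.le
  set c : ℝ := r ^ s with hc_def
  have hc : 0 < c := rpow_pos_of_pos hr s
  set cv : ℝ := r ^ (((N:ℝ) - 1) / N) with hcv_def
  have hcv : 0 < cv := rpow_pos_of_pos hr _
  -- rpow identities
  have hsq : ∀ y : EuclideanSpace ℝ (Fin N), ((‖y‖^2 : ℝ)) ^ (α/2) = ‖y‖ ^ α := by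
    intro y
    rw [← Real.rpow_natCast ‖y‖ 2, ← Real.rpow_mul (norm_nonneg y)]
    congr 1
    push_cast
    ring
  have hx2 : ((‖x‖^2 : ℝ)) ≠ 0 := by positivity
  have e2 : ((‖x‖^2 : ℝ)) ^ (α/2 - 1) = ‖x‖ ^ (α - 2) := by
    rw [← Real.rpow_natCast ‖x‖ 2, ← Real.rpow_mul (norm_nonneg x)]
    congr 1
    push_cast
    ring
  have hw0 : (0:ℝ) ≤ ‖x‖ ^ (α - 2) := rpow_nonneg (norm_nonneg x) _
  have hcaw0 : (0:ℝ) ≤ c * α * ‖x‖ ^ (α - 2) :=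
    mul_nonneg (mul_nonneg hc.le hα0) hw0
  -- derivative of F
  have hg2 : HasFDerivAt (fun y : EuclideanSpace ℝ (Fin N) => (‖y‖^2 : ℝ))
      (2 • innerSL ℝ x) x := (hasStrictFDerivAt_norm_sq x).hasFDerivAt
  have hg : HasFDerivAt (fun y : EuclideanSpace ℝ (Fin N) => ((‖y‖^2 : ℝ)) ^ (α/2))
      (((α/2) * (‖x‖^2) ^ (α/2 - 1)) • (2 • innerSL ℝ x)) x :=
    hg2.rpow_const (Or.inl hx2)
  set L : EuclideanSpace ℝ (Fin N) →L[ℝ] EuclideanSpace ℝ (Fin N) :=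
    (c * ((‖x‖^2 : ℝ)) ^ (α/2)) • ContinuousLinearMap.id ℝ _ +
    (c • (((α/2) * (‖x‖^2) ^ (α/2 - 1)) • (2 • innerSL ℝ x))).smulRight x with hL_def
  have hFe : F = fun y => (c * ((‖y‖^2 : ℝ)) ^ (α/2)) • y := by
    funext y
    rw [hF y, hsq y]
  have hFd : HasFDerivAt F L x := by
    rw [hFe]
    exact (hg.const_mul c).smul (hasFDerivAt_id x)
  -- norm of F x
  have hFx : ‖F x‖ = c * ‖x‖ ^ α * ‖x‖ := by
    rw [hF x, norm_smul, Real.norm_eq_abs, abs_of_pos (by positivity)]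
  -- key arithmetic: ‖F x‖ ^ (γ/N) = c * (1 + α) * ‖x‖ ^ α
  have hM : ‖F x‖ ^ (γ / (N:ℝ)) = c * (1 + α) * ‖x‖ ^ α := by
    have h1 : c * ‖x‖ ^ α * ‖x‖ = c * ‖x‖ ^ (α + 1) := by
      rw [Real.rpow_add hx', Real.rpow_one]; ring
    rw [hFx, h1, Real.mul_rpow hc.le (rpow_nonneg (norm_nonneg x) _),
      hc_def, ← Real.rpow_mul hr.le, ← Real.rpow_mul (norm_nonneg x)]
    have e3 : s * (γ / N) = α := by
      rw [hs_def, hα_def]; field_simp; try ring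
    have e4 : (α + 1) * (γ / N) = α := by
      rw [hα_def]; field_simp; try ring
    have e5 : (1 : ℝ) + α = r⁻¹ := by
      rw [hα_def, hr_def]; field_simp; try ring
    have e6 : r ^ α = r ^ s * (1 + α) := by
      rw [e5, ← Real.rpow_neg_one r, ← Real.rpow_add hr]
      congr 1
      rw [hα_def, hs_def]; field_simp; try ring
    rw [e3, e4, e6]; try ring
  -- operator norm bound
  have hM0 : (0:ℝ) ≤ ‖F x‖ ^ (γ / (N:ℝ)) := rpow_nonneg (norm_nonneg _) _
  have hL : ‖L‖ ≤ ‖F x‖ ^ (γ / (N:ℝ)) := by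
    refine ContinuousLinearMap.opNorm_le_bound _ hM0 fun h => ?_
    have hLh : L h = (c * ‖x‖ ^ α) • h +
        ((c * α * ‖x‖ ^ (α - 2)) * (inner ℝ x h : ℝ)) • x := by
      rw [hL_def]
      simp only [ContinuousLinearMap.add_apply, ContinuousLinearMap.coe_smul',
        Pi.smul_apply, ContinuousLinearMap.id_apply,
        ContinuousLinearMap.smulRight_apply, innerSL_apply_apply, smul_eq_mul,
        hsq x, e2]
      match_scalars <;> ring
    have hip : |(inner ℝ x h : ℝ)| ≤ ‖x‖ * ‖h‖ := abs_real_inner_le_norm x h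
    have ha : ‖(c * ‖x‖ ^ α) • h‖ = c * ‖x‖ ^ α * ‖h‖ := by
      rw [norm_smul, Real.norm_eq_abs, abs_of_nonneg (by positivity)]
    have hb : ‖((c * α * ‖x‖ ^ (α - 2)) * (inner ℝ x h : ℝ)) • x‖ ≤
        c * α * ‖x‖ ^ (α - 2) * (‖x‖ * ‖h‖) * ‖x‖ := by
      rw [norm_smul, Real.norm_eq_abs, abs_mul, abs_of_nonneg hcaw0]
      exact mul_le_mul_of_nonneg_right
        (mul_le_mul_of_nonneg_left hip hcaw0) (norm_nonneg x)
    have e7 : ‖x‖ ^ (α - 2) * (‖x‖ * ‖x‖) = ‖x‖ ^ α := by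
      have h2 : ‖x‖ * ‖x‖ = ‖x‖ ^ (2:ℝ) := by
        rw [← sq, ← Real.rpow_natCast ‖x‖ 2]
        norm_num
      rw [h2, ← Real.rpow_add hx']
      norm_num
    rw [hLh, hM]
    calc ‖(c * ‖x‖ ^ α) • h + ((c * α * ‖x‖ ^ (α - 2)) * (inner ℝ x h : ℝ)) • x‖
        ≤ ‖(c * ‖x‖ ^ α) • h‖ + ‖((c * α * ‖x‖ ^ (α - 2)) * (inner ℝ x h : ℝ)) • x‖ :=
          norm_add_le _ _
      _ ≤ c * ‖x‖ ^ α * ‖h‖ + c * α * ‖x‖ ^ (α - 2) * (‖x‖ * ‖h‖) * ‖x‖ := by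
          rw [ha]; linarith [hb]
      _ = c * ‖x‖ ^ α * ‖h‖ + c * α * (‖x‖ ^ (α - 2) * (‖x‖ * ‖x‖)) * ‖h‖ := by ring
      _ = c * (1 + α) * ‖x‖ ^ α * ‖h‖ := by rw [e7]; ring
  -- chain rule
  have hvd : HasFDerivAt v (cv • ((fderiv ℝ u (F x)).comp L)) x := by
    have hve : v = fun y => cv * u (F y) := funext hv
    rw [hve]
    exact (hu.hasFDerivAt.comp x hFd).const_mul cv
  have hgu : ‖gradient u (F x)‖ = ‖fderiv ℝ u (F x)‖ := by
    unfold gradient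
    exact LinearIsometryEquiv.norm_map _ _
  have hgv : ‖gradient v x‖ = ‖cv • ((fderiv ℝ u (F x)).comp L)‖ := by
    unfold gradient
    rw [hvd.fderiv]
    exact LinearIsometryEquiv.norm_map _ _
  rw [hgv, hgu]
  calc ‖cv • ((fderiv ℝ u (F x)).comp L)‖
      = cv * ‖(fderiv ℝ u (F x)).comp L‖ := by
        rw [norm_smul cv ((fderiv ℝ u (F x)).comp L), Real.norm_eq_abs, abs_of_pos hcv]
    _ ≤ cv * (‖fderiv ℝ u (F x)‖ * ‖L‖) :=
        mul_le_mul_of_nonneg_left (ContinuousLinearMap.opNorm_comp_le _ _) hcv.le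
    _ ≤ cv * (‖fderiv ℝ u (F x)‖ * (‖F x‖ ^ (γ / (N:ℝ)))) := by
        have := mul_le_mul_of_nonneg_left hL (norm_nonneg (fderiv ℝ u (F x)))
        exact mul_le_mul_of_nonneg_left this hcv.le
    _ = cv * ‖F x‖ ^ (γ / (N:ℝ)) * ‖fderiv ℝ u (F x)‖ := by ring
end

section
/- Let $N \ge 2$, $-\infty < \gamma \le \beta < N$, and let $u_n$ be the Moser sequence defined by $u_n(x) = A_n b_n$ for $|x| < e^{-b_n}$, $u_n(x) = A_n \log(1/|x|)$ for $e^{-b_n} \le |x| < 1$, $u_n(x) = 0$ for $|x| \ge 1$, where $A_n = \omega_{N-1}^{-1/N}(n/(N-\beta))^{-1/N}$ and $b_n = n/(N-\beta)$. Then $n \int_{\mathbb{R}^N} |u_n(x)|^N |x|^{-\gamma} dx \to \frac{(N-\beta)\, \Gamma(N+1)}{(N-\gamma)^{N+1}}$ as $n \to \infty$. -/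
open MeasureTheory

noncomputable def sphereArea (N : ℕ) : ℝ :=
  N * (volume (Metric.ball (0 : EuclideanSpace ℝ (Fin N)) 1)).toReal

noncomputable def moser (N : ℕ) (β : ℝ) (n : ℕ) (x : EuclideanSpace ℝ (Fin N)) : ℝ :=
  let b : ℝ := n / ((N : ℝ) - β)
  let A : ℝ := (sphereArea N) ^ (-(1 : ℝ) / N) * b ^ (-(1 : ℝ) / N)
  if ‖x‖ < Real.exp (-b) then A * b
  else if ‖x‖ < 1 then A * Real.log (1 / ‖x‖)
  else 0

open Set Filter

private lemma gammaLimit (N : ℕ) :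
    Tendsto (fun X : ℝ => X ^ N * Real.exp (-X) + ∫ t in (0:ℝ)..X, Real.exp (-t) * t ^ N)
      atTop (nhds (Real.Gamma ((N : ℝ) + 1))) := by
  have hint : IntegrableOn (fun t : ℝ => Real.exp (-t) * t ^ N) (Ioi (0:ℝ)) := by
    have h := Real.GammaIntegral_convergent (s := (N : ℝ) + 1) (by positivity)
    refine h.congr_fun (fun x _ => ?_) measurableSet_Ioi
    norm_num [Real.rpow_natCast]
  have h2 := intervalIntegral_tendsto_integral_Ioi 0 hint tendsto_id
  have hΓ : (∫ t in Ioi (0:ℝ), Real.exp (-t) * t ^ N) = Real.Gamma ((N:ℝ) + 1) := by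
    rw [Real.Gamma_eq_integral (by positivity)]
    refine setIntegral_congr_fun measurableSet_Ioi fun x _ => ?_
    norm_num [Real.rpow_natCast]
  rw [hΓ] at h2
  simpa using (Real.tendsto_pow_mul_exp_neg_atTop_nhds_zero N).add h2

private lemma moser_eval (N : ℕ) (hN : 2 ≤ N) (β γ : ℝ) (hγβ : γ ≤ β) (hβ : β < N)
    (n : ℕ) (hn : 1 ≤ n) :
    (n : ℝ) * (∫⁻ x, ENNReal.ofReal (|moser N β n x| ^ N * ‖x‖ ^ (-γ))).toReal
      = ((N:ℝ) - β) / ((N:ℝ) - γ) ^ (N + 1) *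
        ((((N:ℝ) - γ) * ((n:ℝ) / ((N:ℝ) - β))) ^ N *
            Real.exp (-(((N:ℝ) - γ) * ((n:ℝ) / ((N:ℝ) - β)))) +
          ∫ t in (0:ℝ)..(((N:ℝ) - γ) * ((n:ℝ) / ((N:ℝ) - β))), Real.exp (-t) * t ^ N) := by
  have hβ' : 0 < (N:ℝ) - β := by linarith
  have hγ' : 0 < (N:ℝ) - γ := by linarith
  set d : ℝ := (N:ℝ) - γ with hd_def
  set b : ℝ := (n:ℝ) / ((N:ℝ) - β) with hb_def
  have hb : 0 < b := div_pos (by exact_mod_cast hn) hβ'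
  set A : ℝ := (sphereArea N) ^ (-(1:ℝ)/N) * b ^ (-(1:ℝ)/N) with hA_def
  set c : ℝ := Real.exp (-b) with hc_def
  have hc : 0 < c := Real.exp_pos _
  have hc1 : c < 1 := by
    calc c < Real.exp 0 := Real.exp_lt_exp.mpr (by linarith)
    _ = 1 := Real.exp_zero
  have hN0 : (0:ℝ) < N := by positivity
  have hvol : 0 < (volume (Metric.ball (0 : EuclideanSpace ℝ (Fin N)) 1)).toReal :=
    ENNReal.toReal_pos (Metric.measure_ball_pos _ _ one_pos).ne' measure_ball_lt_top.ne
  have hω : 0 < sphereArea N := by rw [sphereArea]; exact mul_pos hN0 hvol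
  have hA : 0 < A := mul_pos (Real.rpow_pos_of_pos hω _) (Real.rpow_pos_of_pos hb _)
  have hA_inv : A ^ N = (sphereArea N * b)⁻¹ := by
    rw [hA_def, mul_pow, ← Real.rpow_natCast ((sphereArea N) ^ (-(1:ℝ)/N)) N,
      ← Real.rpow_natCast (b ^ (-(1:ℝ)/N)) N, ← Real.rpow_mul hω.le, ← Real.rpow_mul hb.le,
      show (-(1:ℝ)/N) * N = -1 by field_simp, Real.rpow_neg_one, Real.rpow_neg_one,
      mul_inv]
  set f : ℝ → ℝ := fun r =>
    |if r < c then A * b else if r < 1 then A * Real.log (1/r) else 0| ^ N * r ^ (-γ)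
    with hf_def
  have key : ∀ x : EuclideanSpace ℝ (Fin N),
      |moser N β n x| ^ N * ‖x‖ ^ (-γ) = f ‖x‖ := by
    intro x
    rw [hf_def]
    simp only [moser]
    rfl
  have h_nn : 0 ≤ᵐ[volume]
      fun x : EuclideanSpace ℝ (Fin N) => |moser N β n x| ^ N * ‖x‖ ^ (-γ) :=
    Filter.Eventually.of_forall fun x => by positivity
  have h_meas : AEStronglyMeasurable
      (fun x : EuclideanSpace ℝ (Fin N) => |moser N β n x| ^ N * ‖x‖ ^ (-γ)) volume := by
    apply Measurable.aestronglyMeasurable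
    refine Measurable.mul ?_ (by fun_prop : Measurable fun x : EuclideanSpace ℝ (Fin N) => ‖x‖ ^ (-γ))
    refine (Measurable.abs ?_).pow_const N
    unfold moser
    exact Measurable.ite (measurableSet_lt measurable_norm measurable_const) measurable_const
      (Measurable.ite (measurableSet_lt measurable_norm measurable_const)
        (measurable_const.mul (Real.measurable_log.comp (measurable_const.div measurable_norm)))
        measurable_const)
  have hlin : (∫⁻ x, ENNReal.ofReal (|moser N β n x| ^ N * ‖x‖ ^ (-γ))).toReal
      = ∫ x : EuclideanSpace ℝ (Fin N), f ‖x‖ := by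
    rw [← integral_eq_lintegral_of_nonneg_ae h_nn h_meas]
    exact integral_congr_ae (Eventually.of_forall key)
  set g : ℝ → ℝ := fun y => y ^ (N - 1) * f y with hg_def
  haveI : Nonempty (Fin N) := Fin.pos_iff_nonempty.mp (by omega)
  have hpolar : ∫ x : EuclideanSpace ℝ (Fin N), f ‖x‖
      = sphereArea N * ∫ y in Ioi (0:ℝ), g y := by
    rw [integral_fun_norm_addHaar volume f]
    simp only [finrank_euclideanSpace_fin, nsmul_eq_mul, smul_eq_mul, sphereArea, hg_def, Measure.real]
    ring
  -- pointwise formulas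
  have hyp : ∀ y : ℝ, 0 < y → (y ^ (N - 1) : ℝ) * y ^ (-γ) = y ^ ((N:ℝ) - 1 - γ) := by
    intro y hy
    rw [← Real.rpow_natCast y (N - 1), ← Real.rpow_add hy]
    congr 1
    rw [Nat.cast_sub (by omega : 1 ≤ N)]
    push_cast
    ring
  have hg1 : ∀ y ∈ Ioo (0:ℝ) c, g y = (A*b)^N * y ^ ((N:ℝ)-1-γ) := by
    intro y hy
    simp only [hg_def, hf_def]
    rw [if_pos hy.2, abs_of_nonneg (le_of_lt (mul_pos hA hb)), ← hyp y hy.1]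
    ring
  set G : ℝ → ℝ := fun y => A^N * Real.log (1/y)^N * y ^ ((N:ℝ)-1-γ) with hG_def
  have hG : ∀ y ∈ Icc c 1, g y = G y := by
    intro y hy
    have hy0 : 0 < y := lt_of_lt_of_le hc hy.1
    rcases eq_or_lt_of_le hy.2 with h1 | h1
    · subst h1
      simp only [hg_def, hf_def, hG_def]
      rw [if_neg (by linarith), if_neg (lt_irrefl 1)]
      norm_num [Real.log_one, zero_pow (show N ≠ 0 by omega)]
    · simp only [hg_def, hf_def, hG_def]
      rw [if_neg (not_lt.mpr hy.1), if_pos h1,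
        abs_of_nonneg (mul_nonneg hA.le (Real.log_nonneg (one_le_one_div hy0 h1.le))),
        mul_pow, ← hyp y hy0]
      ring
  have hg_out : ∀ y ∈ Ioi (1:ℝ), g y = 0 := by
    intro y hy
    have hy1 : (1:ℝ) < y := hy
    simp only [hg_def, hf_def]
    rw [if_neg (by linarith), if_neg (by linarith), abs_zero, zero_pow (by omega), zero_mul,
      mul_zero]
  -- integrability
  have hI1 : IntervalIntegrable g volume 0 c := by
    rw [intervalIntegrable_iff_integrableOn_Ioc_of_le hc.le,
      integrableOn_Ioc_iff_integrableOn_Ioo]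
    have h := ((intervalIntegral.intervalIntegrable_rpow' (a := 0) (b := c)
      (r := (N:ℝ)-1-γ) (by linarith)).const_mul ((A*b)^N))
    rw [intervalIntegrable_iff_integrableOn_Ioc_of_le hc.le,
      integrableOn_Ioc_iff_integrableOn_Ioo] at h
    exact h.congr_fun (fun y hy => (hg1 y hy).symm) measurableSet_Ioo
  have hGcont : ContinuousOn G {y : ℝ | 0 < y} := by
    rw [hG_def]
    refine ContinuousOn.mul (ContinuousOn.mul continuousOn_const ?_) ?_
    · exact ((Real.continuousOn_log.comp (continuousOn_const.div continuousOn_id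
        fun y hy => ne_of_gt hy) fun y hy => one_div_ne_zero (ne_of_gt hy)).pow N)
    · exact ContinuousOn.rpow_const continuousOn_id fun y hy => Or.inl (ne_of_gt hy)
  have hGint : IntervalIntegrable G volume c 1 := by
    refine ContinuousOn.intervalIntegrable (hGcont.mono ?_)
    rw [uIcc_of_le hc1.le]
    exact fun y hy => lt_of_lt_of_le hc hy.1
  have hI2 : IntervalIntegrable g volume c 1 := by
    rw [intervalIntegrable_iff_integrableOn_Icc_of_le hc1.le]
    rw [intervalIntegrable_iff_integrableOn_Icc_of_le hc1.le] at hGint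
    exact hGint.congr_fun (fun y hy => (hG y hy).symm) measurableSet_Icc
  -- values
  have hval1 : ∫ y in (0:ℝ)..c, g y = (A*b)^N * (c ^ ((N:ℝ)-γ) / ((N:ℝ)-γ)) := by
    have hne : ∀ᵐ y : ℝ ∂volume, y ≠ c := by
      rw [ae_iff]
      simpa using measure_singleton c
    have heq : ∀ᵐ y : ℝ ∂volume, y ∈ uIoc (0:ℝ) c → g y = (A*b)^N * y ^ ((N:ℝ)-1-γ) := by
      filter_upwards [hne] with y hy hmem
      rw [uIoc_of_le hc.le] at hmem
      exact hg1 y ⟨hmem.1, lt_of_le_of_ne hmem.2 hy⟩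
    rw [intervalIntegral.integral_congr_ae heq, intervalIntegral.integral_const_mul,
      integral_rpow (Or.inl (by linarith)),
      show (N:ℝ)-1-γ+1 = (N:ℝ)-γ by ring, Real.zero_rpow hγ'.ne', sub_zero]
  have hval2 : ∫ y in c..1, g y
      = A^N / d^(N+1) * ∫ t in (0:ℝ)..(d*b), Real.exp (-t) * t ^ N := by
    have hd0 : d ≠ 0 := hγ'.ne'
    set φ : ℝ → ℝ := fun t => Real.exp (-(t/d)) with hφ_def
    set φ' : ℝ → ℝ := fun t => Real.exp (-(t/d)) * (-(1/d)) with hφ'_def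
    have hderiv : ∀ t ∈ uIcc (0:ℝ) (d*b), HasDerivAt φ (φ' t) t := by
      intro t _
      have h1 : HasDerivAt (fun s : ℝ => -(s/d)) (-(1/d)) t := by
        exact ((hasDerivAt_id' t).div_const d).neg
      exact (Real.hasDerivAt_exp (-(t/d))).comp t h1
    have hφ'c : ContinuousOn φ' (uIcc 0 (d*b)) :=
      (Continuous.mul (Real.continuous_exp.comp (continuous_id.div_const d).neg)
        continuous_const).continuousOn
    have himg : ContinuousOn G (φ '' uIcc 0 (d*b)) := by
      refine hGcont.mono ?_
      rintro y ⟨t, _, rfl⟩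
      exact Real.exp_pos _
    have hsub := intervalIntegral.integral_comp_smul_deriv' hderiv hφ'c himg
    have hφ0 : φ 0 = 1 := by simp [hφ_def]
    have hφX : φ (d*b) = c := by
      rw [hφ_def, hc_def]
      simp only []
      congr 1
      field_simp
    rw [hφ0, hφX] at hsub
    have hpt : ∀ t : ℝ, φ' t • (G ∘ φ) t = -(A^N / d^(N+1)) * (Real.exp (-t) * t^N) := by
      intro t
      have hexp : Real.exp (-(t/d)) * Real.exp (-(t/d)*((N:ℝ)-1-γ)) = Real.exp (-t) := by
        rw [← Real.exp_add]
        congr 1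
        field_simp
        ring
      simp only [hφ'_def, hφ_def, hG_def, Function.comp_apply, smul_eq_mul]
      have h1 : Real.log (1/Real.exp (-(t/d))) = t/d := by
        rw [one_div, Real.log_inv, Real.log_exp, neg_neg]
      have h2 : Real.exp (-(t/d)) ^ ((N:ℝ)-1-γ) = Real.exp (-(t/d) * ((N:ℝ)-1-γ)) :=
        (Real.exp_mul _ _).symm
      rw [h1, h2]
      calc Real.exp (-(t/d)) * (-(1/d)) * (A^N * (t/d)^N * Real.exp (-(t/d)*((N:ℝ)-1-γ)))
          = -(A^N) * (t/d)^N * (1/d) *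
            (Real.exp (-(t/d)) * Real.exp (-(t/d)*((N:ℝ)-1-γ))) := by ring
        _ = -(A^N) * (t/d)^N * (1/d) * Real.exp (-t) := by rw [hexp]
        _ = -(A^N / d^(N+1)) * (Real.exp (-t) * t^N) := by
            rw [div_pow, pow_succ]
            field_simp
    have hL : ∫ t in (0:ℝ)..(d*b), φ' t • (G ∘ φ) t
        = -(A^N / d^(N+1)) * ∫ t in (0:ℝ)..(d*b), Real.exp (-t) * t^N := by
      rw [← intervalIntegral.integral_const_mul]
      exact intervalIntegral.integral_congr fun t _ => hpt t
    rw [hL, intervalIntegral.integral_symm c 1] at hsub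
    have hgG : ∫ y in c..1, g y = ∫ y in c..1, G y :=
      intervalIntegral.integral_congr (by rw [uIcc_of_le hc1.le]; exact fun y hy => hG y hy)
    rw [hgG]
    linarith [hsub]
  -- assemble
  have hIoi : ∫ y in Ioi (0:ℝ), g y = (∫ y in (0:ℝ)..c, g y) + ∫ y in c..1, g y := by
    have hIoc : IntegrableOn g (Ioc (0:ℝ) 1) volume := by
      rw [← Ioc_union_Ioc_eq_Ioc hc.le hc1.le]
      exact ((intervalIntegrable_iff_integrableOn_Ioc_of_le hc.le).mp hI1).union
        ((intervalIntegrable_iff_integrableOn_Ioc_of_le hc1.le).mp hI2)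
    have hIoi1 : IntegrableOn g (Ioi (1:ℝ)) volume :=
      (integrableOn_zero : IntegrableOn (fun _ : ℝ => (0:ℝ)) (Ioi 1) volume).congr_fun
        (fun y hy => (hg_out y hy).symm) measurableSet_Ioi
    rw [← Ioc_union_Ioi_eq_Ioi (zero_le_one (α := ℝ)),
      setIntegral_union (Set.Ioc_disjoint_Ioi le_rfl) measurableSet_Ioi hIoc hIoi1,
      setIntegral_eq_zero_of_forall_eq_zero hg_out, add_zero,
      ← intervalIntegral.integral_of_le zero_le_one,
      ← intervalIntegral.integral_add_adjacent_intervals hI1 hI2]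
  rw [hlin, hpolar, hIoi, hval1, hval2]
  -- scalar algebra
  have hnb : (n:ℝ) = ((N:ℝ) - β) * b := by rw [hb_def]; field_simp
  have hcd : c ^ ((N:ℝ)-γ) = Real.exp (-(d*b)) := by
    rw [hc_def, ← Real.exp_mul]
    congr 1
    rw [hd_def]
    ring
  rw [hcd, mul_pow A b, hA_inv, show (d*b)^N = d^N * b^N from mul_pow d b N, hnb]
  have hd0 : d ≠ 0 := hγ'.ne'
  field_simp
  rw [← hd_def]
  field_simp
  ring


theorem moser_weighted_LN_norm_asymptotics (N : ℕ) (hN : 2 ≤ N) (β γ : ℝ)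
    (hγβ : γ ≤ β) (hβ : β < N) :
    Filter.Tendsto
      (fun n : ℕ => (n : ℝ) *
        (∫⁻ x, ENNReal.ofReal (|moser N β n x| ^ N * ‖x‖ ^ (-γ))).toReal)
      Filter.atTop
      (nhds (((N : ℝ) - β) * Real.Gamma (N + 1) / ((N : ℝ) - γ) ^ (N + 1))) := by
  have hβ' : 0 < (N:ℝ) - β := by linarith
  have hγ' : 0 < (N:ℝ) - γ := by linarith
  have hX : Tendsto (fun n : ℕ => ((N:ℝ) - γ) * ((n:ℝ) / ((N:ℝ) - β))) atTop atTop :=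
    (tendsto_natCast_atTop_atTop.atTop_div_const hβ').const_mul_atTop hγ'
  have h := ((gammaLimit N).comp hX).const_mul (((N:ℝ) - β) / ((N:ℝ) - γ) ^ (N + 1))
  have hlim : (((N:ℝ) - β) / ((N:ℝ) - γ) ^ (N + 1)) * Real.Gamma ((N:ℝ) + 1)
      = ((N : ℝ) - β) * Real.Gamma ((N:ℝ) + 1) / ((N : ℝ) - γ) ^ (N + 1) := by ring
  rw [hlim] at h
  refine h.congr' ?_
  filter_upwards [eventually_ge_atTop 1] with n hn
  simp only [Function.comp_apply]
  exact (moser_eval N hN β γ hγβ hβ n hn).symm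
end

section
/- Let $N \ge 2$, $\gamma < N$, $F(x) = \left(\frac{N-\gamma}{N}\right)^{\frac{N}{N-\gamma}} |x|^{\frac{\gamma}{N-\gamma}} x$, and let $u : \mathbb{R}^N \to \mathbb{R}$ be a radial differentiable function (i.e., $u(x) = \varphi(|x|)$ for some differentiable $\varphi$). Define $v(x) = \left(\frac{N-\gamma}{N}\right)^{\frac{N-1}{N}} u(F(x))$. Then for all $x \ne 0$, $|\nabla v(x)| = \left(\frac{N-\gamma}{N}\right)^{\frac{N-1}{N}} |F(x)|^{\frac{\gamma}{N}} |\nabla u(F(x))| = (\det DF(x))^{1/N} |\nabla u(F(x))|$, i.e., the pointwise gradient inequality becomes an equality for radial functions, for every $\gamma < N$ (including negative $\gamma$). -/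
set_option maxHeartbeats 1000000

open Real

section Helpers

variable {E : Type*} [NormedAddCommGroup E] [InnerProductSpace ℝ E]

lemma my_norm_gradient_eq [CompleteSpace E] (f : E → ℝ) (x : E) :
    ‖gradient f x‖ = ‖fderiv ℝ f x‖ := by
  rw [gradient]
  exact (InnerProductSpace.toDual ℝ E).symm.norm_map _

lemma my_hasFDerivAt_norm_of_ne {x : E} (hx : x ≠ 0) :
    HasFDerivAt (fun y : E => ‖y‖) (‖x‖⁻¹ • (innerSL ℝ x : E →L[ℝ] ℝ)) x := by
  have h1 : HasFDerivAt (fun y : E => ‖y‖ ^ 2) ((2 : ℝ) • (innerSL ℝ x : E →L[ℝ] ℝ)) x := by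
    have := (hasFDerivAt_id x).norm_sq
    simp only [ContinuousLinearMap.comp_id, ← Nat.cast_smul_eq_nsmul ℝ] at this
    simpa using this
  have hnx : (0:ℝ) < ‖x‖ := norm_pos_iff.mpr hx
  have h2 := (Real.hasDerivAt_sqrt (by positivity : ‖x‖ ^ 2 ≠ 0)).comp_hasFDerivAt x h1
  have he : (fun y : E => Real.sqrt (‖y‖ ^ 2)) = fun y : E => ‖y‖ := by
    funext y; rw [Real.sqrt_sq (norm_nonneg y)]
  rw [show ((fun x => √x) ∘ fun y : E => ‖y‖ ^ 2) = fun y : E => ‖y‖ from he ▸ rfl] at h2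
  refine h2.congr_fderiv ?_
  rw [Real.sqrt_sq (norm_nonneg x), smul_smul]
  congr 1
  field_simp

lemma my_norm_fderiv_radial {ψ : ℝ → ℝ} {d : ℝ} {x : E} (hx : x ≠ 0)
    (hψ : HasDerivAt ψ d ‖x‖) :
    ‖fderiv ℝ (fun y : E => ψ ‖y‖) x‖ = |d| := by
  have h : HasFDerivAt (fun y : E => ψ ‖y‖) (d • ‖x‖⁻¹ • (innerSL ℝ) x) x :=
    hψ.comp_hasFDerivAt x (my_hasFDerivAt_norm_of_ne hx)
  have hnx : (0:ℝ) < ‖x‖ := norm_pos_iff.mpr hx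
  rw [h.fderiv, norm_smul, norm_smul, innerSL_apply_norm, Real.norm_eq_abs, Real.norm_eq_abs,
    abs_inv, abs_norm]
  field_simp

lemma my_det_aux (N : ℕ) (c d' : ℝ) (hc : c ≠ 0) (x : EuclideanSpace ℝ (Fin N)) :
    LinearMap.det ((c • ContinuousLinearMap.id ℝ (EuclideanSpace ℝ (Fin N)) +
        (d' • (innerSL ℝ x : EuclideanSpace ℝ (Fin N) →L[ℝ] ℝ)).smulRight x).toLinearMap) =
      c ^ N * (1 + c⁻¹ * (d' * ‖x‖ ^ 2)) := by
  set T := c • ContinuousLinearMap.id ℝ (EuclideanSpace ℝ (Fin N)) +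
        (d' • (innerSL ℝ x : EuclideanSpace ℝ (Fin N) →L[ℝ] ℝ)).smulRight x with hT
  let b := (EuclideanSpace.basisFun (Fin N) ℝ).toBasis
  have hM : LinearMap.toMatrix b b T.toLinearMap =
      c • ((1 : Matrix (Fin N) (Fin N) ℝ) +
        Matrix.replicateCol Unit (fun i => (c⁻¹ * d') * x i) * Matrix.replicateRow Unit (fun j => x j)) := by
    ext i j
    simp only [Matrix.smul_apply, Matrix.add_apply, Matrix.one_apply, Matrix.mul_apply]
    simp [T, LinearMap.toMatrix_apply, b, Matrix.one_apply,
      EuclideanSpace.basisFun_apply, PiLp.inner_apply, EuclideanSpace.single_apply,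
      mul_comm, mul_assoc, mul_left_comm]
    by_cases h : i = j <;> simp [h] <;> field_simp
  have hsum : ∑ j, x j * ((c⁻¹ * d') * x j) = c⁻¹ * (d' * ‖x‖ ^ 2) := by
    have hn : ‖x‖ ^ 2 = ∑ j, x j ^ 2 := by
      rw [EuclideanSpace.norm_eq, Real.sq_sqrt (by positivity)]
      simp [Real.norm_eq_abs, sq_abs]
    rw [hn, Finset.mul_sum, Finset.mul_sum]
    congr 1; funext j; ring
  rw [← LinearMap.det_toMatrix b, hM, Matrix.det_smul, Matrix.det_one_add_replicateCol_mul_replicateRow,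
    dotProduct]
  simp only [Fintype.card_fin]
  rw [hsum]

end Helpers

theorem gradient_equality_for_radial_functions (N : ℕ) (hN : 2 ≤ N) (γ : ℝ) (hγ : γ < N)
    (F : EuclideanSpace ℝ (Fin N) → EuclideanSpace ℝ (Fin N))
    (hF : ∀ x, F x = ((((N : ℝ) - γ) / N) ^ ((N : ℝ) / ((N : ℝ) - γ)) *
      ‖x‖ ^ (γ / ((N : ℝ) - γ))) • x)
    (u : EuclideanSpace ℝ (Fin N) → ℝ) (φ : ℝ → ℝ) (hφ : Differentiable ℝ φ)
    (hu : ∀ x, u x = φ ‖x‖)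
    (v : EuclideanSpace ℝ (Fin N) → ℝ)
    (hv : ∀ x, v x = (((N : ℝ) - γ) / N) ^ (((N : ℝ) - 1) / N) * u (F x)) :
    ∀ x : EuclideanSpace ℝ (Fin N), x ≠ 0 →
      ‖gradient v x‖ = (((N : ℝ) - γ) / N) ^ (((N : ℝ) - 1) / N) *
          ‖F x‖ ^ (γ / N) * ‖gradient u (F x)‖ ∧
      ‖gradient v x‖ = (LinearMap.det (fderiv ℝ F x).toLinearMap) ^ ((1 : ℝ) / N) *
          ‖gradient u (F x)‖ := by
  intro x hx
  have hN0 : (0:ℝ) < N := by positivity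
  have hβ : (0:ℝ) < (N:ℝ) - γ := by linarith
  set β : ℝ := (N:ℝ) - γ with hβdef
  set B : ℝ := β / N with hBdef
  have hB : 0 < B := by positivity
  set a : ℝ := B ^ ((N:ℝ) / β) with hadef
  set e : ℝ := γ / β with hedef
  set C : ℝ := B ^ (((N:ℝ) - 1) / N) with hCdef
  have ha : 0 < a := rpow_pos_of_pos hB _
  have hC : 0 < C := rpow_pos_of_pos hB _
  have hr : (0:ℝ) < ‖x‖ := norm_pos_iff.mpr hx
  set r : ℝ := ‖x‖ with hrdef
  have hre : (0:ℝ) < r ^ e := rpow_pos_of_pos hr _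
  have hc : (0:ℝ) < a * r ^ e := mul_pos ha hre
  -- basic facts
  have he1 : e + 1 = (N:ℝ) / β := by
    rw [hedef, hβdef, div_add_one (by linarith), add_sub_cancel]
  have he1pos : (0:ℝ) < e + 1 := by rw [he1]; positivity
  have hkey : ∀ y : EuclideanSpace ℝ (Fin N), ‖F y‖ = a * ‖y‖ ^ e * ‖y‖ := by
    intro y
    rw [hF y, norm_smul, Real.norm_eq_abs,
      abs_of_nonneg (mul_nonneg ha.le (rpow_nonneg (norm_nonneg y) _))]
  have hFx : F x = (a * r ^ e) • x := hF x
  have hFx0 : F x ≠ 0 := by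
    rw [hFx]; exact smul_ne_zero (ne_of_gt hc) hx
  have hFxnorm : ‖F x‖ = a * r ^ e * r := hkey x
  set m : ℝ := a * r ^ e * r with hmdef
  have hm : 0 < m := mul_pos hc hr
  -- gradient of u at F x
  have hu' : u = fun y => φ ‖y‖ := funext hu
  have hUnorm : ‖gradient u (F x)‖ = |deriv φ m| := by
    rw [my_norm_gradient_eq, hu', ← hFxnorm,
      my_norm_fderiv_radial hFx0 ((hφ (‖F x‖)).hasDerivAt), hFxnorm]
  -- gradient of v at x
  have hv' : v = fun y => C * φ (a * ‖y‖ ^ e * ‖y‖) := by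
    funext y
    rw [hv, hu, hkey y]
  have hψ : HasDerivAt (fun s : ℝ => C * φ (a * s ^ e * s))
      (C * (deriv φ m * (a * (e + 1) * r ^ e))) r := by
    have h1 : HasDerivAt (fun s : ℝ => s ^ e) (e * r ^ (e - 1)) r :=
      Real.hasDerivAt_rpow_const (Or.inl hr.ne')
    have h2 : HasDerivAt (fun s : ℝ => a * s ^ e * s)
        ((a * (e * r ^ (e - 1))) * r + (a * r ^ e) * 1) r :=
      (h1.const_mul a).mul (hasDerivAt_id r)
    have hsimp : (a * (e * r ^ (e - 1))) * r + (a * r ^ e) * 1 = a * (e + 1) * r ^ e := by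
      have : r ^ (e - 1) * r = r ^ e := by
        rw [← Real.rpow_add_one hr.ne', sub_add_cancel]
      calc (a * (e * r ^ (e - 1))) * r + (a * r ^ e) * 1
          = a * e * (r ^ (e - 1) * r) + a * r ^ e := by ring
        _ = a * e * r ^ e + a * r ^ e := by rw [this]
        _ = a * (e + 1) * r ^ e := by ring
    rw [hsimp] at h2
    have h3 : HasDerivAt (φ ∘ (fun s : ℝ => a * s ^ e * s))
        (deriv φ m * (a * (e + 1) * r ^ e)) r := HasDerivAt.comp r ((hφ _).hasDerivAt) h2
    have h3' : HasDerivAt (fun s : ℝ => φ (a * s ^ e * s))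
        (deriv φ m * (a * (e + 1) * r ^ e)) r := h3
    exact h3'.const_mul C
  have hVnorm : ‖gradient v x‖ = C * |deriv φ m| * (a * (e + 1) * r ^ e) := by
    rw [my_norm_gradient_eq, hv']
    have h4 : ‖fderiv ℝ (fun y : EuclideanSpace ℝ (Fin N) => C * φ (a * ‖y‖ ^ e * ‖y‖)) x‖
        = |C * (deriv φ m * (a * (e + 1) * r ^ e))| := my_norm_fderiv_radial hx hψ
    rw [h4, abs_mul, abs_mul, abs_of_pos hC,
      abs_of_pos (by positivity : (0:ℝ) < a * (e + 1) * r ^ e)]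
    ring
  -- key scalar identity 1 : a * (e+1) = B ^ e
  have hBinv : B⁻¹ = (N:ℝ) / β := by rw [hBdef]; field_simp
  have hβN : β ≠ 0 := hβ.ne'
  have hexp1 : (N:ℝ)/β + (-1) = e := by
    rw [hedef]; field_simp; linarith [hβdef]
  have hae1 : a * (e + 1) = B ^ e := by
    calc a * (e + 1) = B ^ ((N:ℝ)/β) * B ^ (-1 : ℝ) := by
          rw [Real.rpow_neg_one, hBinv, hadef, he1]
      _ = B ^ ((N:ℝ)/β + (-1)) := (Real.rpow_add hB _ _).symm
      _ = B ^ e := by rw [hexp1]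
  -- ‖F x‖ ^ (γ / N) = B ^ e * r ^ e
  have hFpow : m ^ (γ / (N:ℝ)) = B ^ e * r ^ e := by
    have hm' : m = a * r ^ (e + 1) := by
      rw [hmdef, mul_assoc, ← Real.rpow_add_one hr.ne']
    have hexp2 : (N:ℝ)/β * (γ/(N:ℝ)) = e := by
      rw [hedef]; field_simp
    have hexp3 : (e + 1) * (γ/(N:ℝ)) = e := by rw [he1, hexp2]
    rw [hm', Real.mul_rpow ha.le (rpow_nonneg hr.le _), ← Real.rpow_mul hr.le]
    congr 1
    · rw [hadef, ← Real.rpow_mul hB.le, hexp2]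
    · rw [hexp3]
  constructor
  · rw [hVnorm, hUnorm, hFxnorm, hFpow, ← hae1]
    ring
  · -- compute fderiv of F and its determinant
    have hD1 : HasDerivAt (fun s : ℝ => a * s ^ e) (a * (e * r ^ (e - 1))) r :=
      (Real.hasDerivAt_rpow_const (Or.inl hr.ne')).const_mul a
    have hcF : HasFDerivAt (fun y : EuclideanSpace ℝ (Fin N) => a * ‖y‖ ^ e)
        ((a * (e * r ^ (e - 1))) • (r⁻¹ • (innerSL ℝ x :
          EuclideanSpace ℝ (Fin N) →L[ℝ] ℝ))) x :=
      HasDerivAt.comp_hasFDerivAt (f := fun y : EuclideanSpace ℝ (Fin N) => ‖y‖) x hD1 (my_hasFDerivAt_norm_of_ne hx)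
    have hFd : HasFDerivAt F
        ((a * r ^ e) • ContinuousLinearMap.id ℝ (EuclideanSpace ℝ (Fin N)) +
          (((a * (e * r ^ (e - 1))) * r⁻¹) • (innerSL ℝ x :
            EuclideanSpace ℝ (Fin N) →L[ℝ] ℝ)).smulRight x) x := by
      have hF' : F = fun y => (a * ‖y‖ ^ e) • y := funext hF
      rw [hF']
      have h6 := hcF.smul (hasFDerivAt_id x)
      refine h6.congr_fderiv ?_
      rw [hrdef, smul_smul]; rfl
    have hre1 : r ^ (e - 1) * r = r ^ e := by
      rw [← Real.rpow_add_one hr.ne', sub_add_cancel]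
    have hdet : LinearMap.det (fderiv ℝ F x).toLinearMap = (a * r ^ e) ^ N * (1 + e) := by
      rw [hFd.fderiv, my_det_aux N _ _ hc.ne' x]
      congr 1
      have h5 : a * (e * r ^ (e - 1)) * r⁻¹ * ‖x‖ ^ 2 = e * (a * r ^ e) := by
        rw [← hrdef, sq]
        calc a * (e * r ^ (e - 1)) * r⁻¹ * (r * r)
            = a * e * (r ^ (e - 1) * r) * (r⁻¹ * r) := by ring
          _ = e * (a * r ^ e) := by rw [hre1, inv_mul_cancel₀ hr.ne']; ring
      rw [h5, mul_comm e, ← mul_assoc, inv_mul_cancel₀ hc.ne', one_mul]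
    have h1e' : e + 1 = B ^ (-1 : ℝ) := by
      rw [Real.rpow_neg_one, hBinv]; exact he1
    have hNne : ((N:ℝ)) ≠ 0 := hN0.ne'
    have hrpow : ((a * r ^ e) ^ N * (1 + e)) ^ ((1 : ℝ) / N)
        = (a * r ^ e) * (1 + e) ^ ((1 : ℝ) / N) := by
      rw [Real.mul_rpow (by positivity) (by linarith [he1pos] : (0:ℝ) ≤ 1 + e)]
      congr 1
      rw [← Real.rpow_natCast (a * r ^ e) N, ← Real.rpow_mul hc.le, mul_one_div,
        div_self hNne, Real.rpow_one]
    have hexp4 : ((N:ℝ) - 1) / N + (-1) = (-1) * ((1:ℝ) / N) := by field_simp; ring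
    have hC1 : C * (e + 1) = (1 + e) ^ ((1 : ℝ) / N) := by
      calc C * (e + 1) = B ^ (((N:ℝ) - 1) / N) * B ^ (-1 : ℝ) := by rw [hCdef, h1e']
        _ = B ^ (((N:ℝ) - 1) / N + (-1)) := (Real.rpow_add hB _ _).symm
        _ = B ^ ((-1) * ((1:ℝ) / N)) := by rw [hexp4]
        _ = (B ^ (-1 : ℝ)) ^ ((1:ℝ) / N) := Real.rpow_mul hB.le _ _
        _ = (1 + e) ^ ((1 : ℝ) / N) := by rw [← h1e', add_comm]
    rw [hVnorm, hUnorm, hdet, hrpow, ← hC1]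
    ring
end
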